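/- Let 𝒢 be the Sprague–Grundy function of i-MARK({1,3},{2,3}) (so s = max S = 3). For every k ≥ 1 and every T ∈ {2,3}, the tuple σ = (0, 1, T) is a valid guess seed for starting position n = 12k, and its guess sequence satisfies, for every j ≥ 0: 𝒢_σ(n+12j) = 0, 𝒢_σ(n+12j+1) = 1, 𝒢_σ(n+12j+2) ∈ {2,3}, 𝒢_σ(n+12j+3) ≠ 0, 𝒢_σ(n+12j+4) = 0, 𝒢_σ(n+12j+5) = 1, 𝒢_σ(n+12j+6) ≠ 1, 𝒢_σ(n+12j+7) = 1, 𝒢_σ(n+12j+8) = 0, 𝒢_σ(n+12j+9) ≠ 0, 𝒢_σ(n+12j+10) ∈ {2,3}, and 𝒢_σ(n+12j+11) = 1. -/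
import Mathlib


/-- The minimum excludant of a set of naturals. -/
noncomputable def mex (T : Set ℕ) : ℕ := sInf {k : ℕ | k ∉ T}

/-- The set of followers of position `n` in the game i-MARK(S,D):
`n - s` for `s ∈ S` with `0 < s ≤ n`, and `n / d` for `d ∈ D` with `2 ≤ d`, `0 < n`, `d ∣ n`. -/
def followers (S D : Finset ℕ) (n : ℕ) : Finset ℕ :=
  ((S.filter fun s => 0 < s ∧ s ≤ n).image fun s => n - s) ∪
  ((D.filter fun d => 2 ≤ d ∧ 0 < n ∧ d ∣ n).image fun d => n / d)

theorem followers_lt {S D : Finset ℕ} {n m : ℕ} (h : m ∈ followers S D n) : m < n := by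
  simp only [followers, Finset.mem_union, Finset.mem_image, Finset.mem_filter] at h
  rcases h with ⟨s, ⟨-, hs, hsn⟩, rfl⟩ | ⟨d, ⟨-, hd, hn, -⟩, rfl⟩
  · omega
  · exact Nat.div_lt_self hn (by omega)

/-- The Sprague–Grundy function of i-MARK(S,D). -/
noncomputable def grundy (S D : Finset ℕ) : ℕ → ℕ
  | n => mex ↑((followers S D n).attach.image fun m => grundy S D m.1)
decreasing_by exact followers_lt m.2

/-- The number of followers of position `n` in i-MARK(S,D) (for positive `S` and `D` with
elements `≥ 2`): `φ(0) = 0` and `φ(n) = #{s ∈ S : s ≤ n} + #{d ∈ D : d ∣ n}` for `n > 0`. -/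
def numFollowers (S D : Finset ℕ) (n : ℕ) : ℕ :=
  if n = 0 then 0 else (S.filter fun s => s ≤ n).card + (D.filter fun d => d ∣ n).card

/-- `σ : ℕ → ℕ` is a guess seed for starting position `n` in i-MARK(S,D) if
`σ i ≤ φ(i)` for all `n ≤ i < n + max S` (values of `σ` outside this window are irrelevant). -/
def IsGuessSeed (S D : Finset ℕ) (n : ℕ) (σ : ℕ → ℕ) : Prop :=
  ∀ i, n ≤ i → i < n + S.sup id → σ i ≤ numFollowers S D i

/-- The guess sequence generated by seed `σ` from starting position `n`: it equals `σ` on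
`[n, n + max S)`, and from `n + max S` on it is computed by the mex rule, using guessed values
for subtraction followers and true Grundy values for division followers. -/
noncomputable def guessSeq (S D : Finset ℕ) (n : ℕ) (σ : ℕ → ℕ) : ℕ → ℕ
  | m =>
    if m < n + S.sup id then σ m
    else
      mex ((↑((S.filter fun t => 0 < t ∧ t ≤ m).attach.image
              fun t => guessSeq S D n σ (m - t.1)) : Set ℕ) ∪
        {g | ∃ d ∈ D, 2 ≤ d ∧ 0 < m ∧ d ∣ m ∧ g = grundy S D (m / d)})
decreasing_by
  have ht := t.2
  simp only [Finset.mem_filter] at ht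
  omega

/-- Convergence occurs in `c` steps at starting position `n`: any two guess sequences from `n`
agree on all positions `m` with `n + c ≤ m < n + c + max S`. -/
def ConvergesIn (S D : Finset ℕ) (n c : ℕ) : Prop :=
  ∀ σ σ' : ℕ → ℕ, IsGuessSeed S D n σ → IsGuessSeed S D n σ' →
    ∀ m, n + c ≤ m → m < n + c + S.sup id → guessSeq S D n σ m = guessSeq S D n σ' m

-- mex lemmas
lemma mex_eq_of {T : Set ℕ} {m : ℕ} (hm : m ∉ T) (h : ∀ k < m, k ∈ T) : mex T = m := by
  refine le_antisymm (Nat.sInf_le hm) (le_csInf ⟨m, hm⟩ ?_)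
  intro b hb
  by_contra hlt
  push_neg at hlt
  exact hb (h b hlt)

lemma mex_eq_zero {T : Set ℕ} (h : 0 ∉ T) : mex T = 0 := mex_eq_of h (by omega)

lemma mex_ne_of_mem {T : Set ℕ} {a : ℕ} (h : a ∈ T) (hT : T.Finite) : mex T ≠ a := by
  intro he
  have hne : {k : ℕ | k ∉ T}.Nonempty := hT.infinite_compl.nonempty
  have := Nat.sInf_mem hne
  rw [show sInf {k : ℕ | k ∉ T} = mex T from rfl, he] at this
  exact this h

lemma grundy_rec (S D : Finset ℕ) (n : ℕ) :
    grundy S D n = mex {g | ∃ m ∈ followers S D n, g = grundy S D m} := by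
  rw [grundy]
  congr 1
  ext g
  simp [eq_comm]

lemma followers_mem (n m : ℕ) : m ∈ followers {1,3} {2,3} n ↔
    ((1 ≤ n ∧ m = n - 1) ∨ (3 ≤ n ∧ m = n - 3) ∨
     (0 < n ∧ 2 ∣ n ∧ m = n / 2) ∨ (0 < n ∧ 3 ∣ n ∧ m = n / 3)) := by
  simp only [followers, Finset.mem_union, Finset.mem_image, Finset.mem_filter,
    Finset.mem_insert, Finset.mem_singleton]
  constructor
  · rintro (⟨s, ⟨hs | hs, h1, h2⟩, rfl⟩ | ⟨d, ⟨hd | hd, h1, h2, h3⟩, rfl⟩) <;> subst_vars <;> tauto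
  · rintro (⟨h, rfl⟩ | ⟨h, rfl⟩ | ⟨h, h2, rfl⟩ | ⟨h, h2, rfl⟩)
    · exact Or.inl ⟨1, by simp; omega⟩
    · exact Or.inl ⟨3, by simp; omega⟩
    · exact Or.inr ⟨2, by simp; omega, rfl⟩
    · exact Or.inr ⟨3, by simp; omega, rfl⟩

lemma grundy_zero : grundy {1,3} {2,3} 0 = 0 := by
  rw [grundy_rec]
  apply mex_eq_zero
  rintro ⟨m, hm, -⟩
  rw [followers_mem] at hm
  omega

lemma grundy_one : grundy {1,3} {2,3} 1 = 1 := by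
  rw [grundy_rec]
  apply mex_eq_of
  · rintro ⟨m, hm, he⟩
    rw [followers_mem] at hm
    have : m = 0 := by omega
    subst this
    rw [grundy_zero] at he
    omega
  · intro p hp
    have : p = 0 := by omega
    subst this
    exact ⟨0, by rw [followers_mem]; omega, grundy_zero.symm⟩

lemma grundy_two : grundy {1,3} {2,3} 2 = 0 := by
  rw [grundy_rec]
  apply mex_eq_zero
  rintro ⟨m, hm, he⟩
  rw [followers_mem] at hm
  have : m = 1 := by omega
  subst this
  rw [grundy_one] at he
  omega

lemma grundy_set_finite (n : ℕ) : ({g | ∃ m ∈ followers {1,3} {2,3} n, g = grundy {1,3} {2,3} m} : Set ℕ).Finite := by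
  apply Set.Finite.subset (Set.finite_range fun m : followers {1,3} {2,3} n => grundy {1,3} {2,3} m.1)
  rintro g ⟨m, hm, rfl⟩
  exact ⟨⟨m, hm⟩, rfl⟩

lemma grundy_key : ∀ n : ℕ,
    (2 ∣ n → 4 ≤ n → grundy {1,3} {2,3} n ≠ 0) ∧
    (¬ 2 ∣ n → ¬ 3 ∣ n → 7 ≤ n → grundy {1,3} {2,3} n = 0) := by
  intro n
  induction n using Nat.strong_induction_on with
  | _ n IH =>
  constructor
  · intro h2 h4
    rw [grundy_rec]
    apply mex_ne_of_mem _ (grundy_set_finite n)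
    -- 0 ∈ the set
    rcases (show n = 4 ∨ n = 6 ∨ (8 ≤ n ∧ n % 6 = 0) ∨ (8 ≤ n ∧ n % 6 = 2) ∨ (8 ≤ n ∧ n % 6 = 4) by omega) with
      rfl | rfl | ⟨h8, h6⟩ | ⟨h8, h6⟩ | ⟨h8, h6⟩
    · exact ⟨2, by rw [followers_mem]; omega, grundy_two.symm⟩
    · exact ⟨2, by rw [followers_mem]; right; right; right; omega, grundy_two.symm⟩
    · refine ⟨n - 1, by rw [followers_mem]; omega, ?_⟩
      exact ((IH (n-1) (by omega)).2 (by omega) (by omega) (by omega)).symm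
    · refine ⟨n - 1, by rw [followers_mem]; omega, ?_⟩
      exact ((IH (n-1) (by omega)).2 (by omega) (by omega) (by omega)).symm
    · refine ⟨n - 3, by rw [followers_mem]; omega, ?_⟩
      exact ((IH (n-3) (by omega)).2 (by omega) (by omega) (by omega)).symm
  · intro h2 h3 h7
    rw [grundy_rec]
    apply mex_eq_zero
    rintro ⟨m, hm, he⟩
    rw [followers_mem] at hm
    rcases hm with ⟨h, rfl⟩ | ⟨h, rfl⟩ | ⟨-, hd, -⟩ | ⟨-, hd, -⟩
    · exact (IH (n-1) (by omega)).1 (by omega) (by omega) he.symm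
    · exact (IH (n-3) (by omega)).1 (by omega) (by omega) he.symm
    · exact h2 hd
    · exact h3 hd

lemma grundy_even_ne {n : ℕ} (h2 : 2 ∣ n) (h4 : 4 ≤ n) : grundy {1,3} {2,3} n ≠ 0 :=
  (grundy_key n).1 h2 h4

lemma grundy_coprime {n : ℕ} (h2 : ¬ 2 ∣ n) (h3 : ¬ 3 ∣ n) (h7 : 7 ≤ n) : grundy {1,3} {2,3} n = 0 :=
  (grundy_key n).2 h2 h3 h7
lemma sup13 : ({1,3} : Finset ℕ).sup id = 3 := rfl

lemma guessSeq_seed (n : ℕ) (σ : ℕ → ℕ) (m : ℕ) (h : m < n + 3) :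
    guessSeq {1,3} {2,3} n σ m = σ m := by
  rw [guessSeq, if_pos (by rw [sup13]; omega)]

lemma guessSeq_step (n : ℕ) (σ : ℕ → ℕ) (m : ℕ) (h : n + 3 ≤ m) :
    guessSeq {1,3} {2,3} n σ m =
      mex ({guessSeq {1,3} {2,3} n σ (m - 1), guessSeq {1,3} {2,3} n σ (m - 3)} ∪
        {g | (2 ∣ m ∧ g = grundy {1,3} {2,3} (m / 2)) ∨
             (3 ∣ m ∧ g = grundy {1,3} {2,3} (m / 3))}) := by
  rw [guessSeq, if_neg (by rw [sup13]; omega)]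
  congr 1
  ext g
  simp only [Set.mem_union, Finset.coe_image, Set.mem_image, Finset.mem_coe,
    Finset.mem_attach, Finset.mem_image, Set.mem_insert_iff, Set.mem_singleton_iff,
    Set.mem_setOf_eq, Finset.mem_insert, Finset.mem_singleton, true_and]
  constructor
  · rintro (⟨⟨t, ht⟩, rfl⟩ | ⟨d, hd, -, -, hdvd, rfl⟩)
    · simp only [Finset.mem_filter, Finset.mem_insert, Finset.mem_singleton] at ht
      rcases ht with ⟨h1 | h1, -⟩ <;> subst h1 <;> tauto
    · rcases hd with rfl | rfl <;> tauto
  · rintro ((rfl | rfl) | (⟨hd, rfl⟩ | ⟨hd, rfl⟩))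
    · exact Or.inl ⟨⟨1, Finset.mem_filter.mpr ⟨by simp, by omega, by omega⟩⟩, rfl⟩
    · exact Or.inl ⟨⟨3, Finset.mem_filter.mpr ⟨by simp, by omega, by omega⟩⟩, rfl⟩
    · exact Or.inr ⟨2, Or.inl rfl, by omega, by omega, hd, rfl⟩
    · exact Or.inr ⟨3, Or.inr rfl, by omega, by omega, hd, rfl⟩

lemma step_set_finite (a b c d : ℕ) (m : ℕ) :
    (({a, b} ∪ {g | (2 ∣ m ∧ g = c) ∨ (3 ∣ m ∧ g = d)}) : Set ℕ).Finite := by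
  apply Set.Finite.subset (Set.toFinite {a, b, c, d})
  rintro g (h | (⟨-, rfl⟩ | ⟨-, rfl⟩)) <;> simp_all <;> tauto
def Pat : ℕ → ℕ → Prop
  | 0, v => v = 0
  | 1, v => v = 1
  | 2, v => v = 2 ∨ v = 3
  | 3, v => v ≠ 0
  | 4, v => v = 0
  | 5, v => v = 1
  | 6, v => v ≠ 1
  | 7, v => v = 1
  | 8, v => v = 0
  | 9, v => v ≠ 0
  | 10, v => v = 2 ∨ v = 3
  | _, v => v = 1

lemma main_key (k T : ℕ) (hk : 1 ≤ k) (hT : T = 2 ∨ T = 3) (σ : ℕ → ℕ)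
    (h0 : σ (12 * k) = 0) (h1 : σ (12 * k + 1) = 1) (h2 : σ (12 * k + 2) = T) :
    ∀ M : ℕ, ∀ j r : ℕ, r < 12 → M = 12 * j + r →
      Pat r (guessSeq {1,3} {2,3} (12 * k) σ (12 * k + M)) := by
  intro M
  induction M using Nat.strong_induction_on with
  | _ M IH =>
  intro j r hr12 hM
  by_cases hM3 : M < 3
  · rw [guessSeq_seed _ _ _ (by omega)]
    interval_cases M
    · have : r = 0 := by omega
      subst this
      show σ (12 * k + 0) = 0
      simpa using h0
    · have : r = 1 := by omega
      subst this
      show σ (12 * k + 1) = 1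
      exact h1
    · have : r = 2 := by omega
      subst this
      show σ (12 * k + 2) = 2 ∨ σ (12 * k + 2) = 3
      rw [h2]; exact hT
  · push_neg at hM3
    rw [guessSeq_step _ _ _ (by omega)]
    have getIH : ∀ M' j' r', M' < M → r' < 12 → M' = 12 * j' + r' →
        Pat r' (guessSeq {1,3} {2,3} (12 * k) σ (12 * k + M')) :=
      fun M' j' r' h hr he => IH M' h j' r' hr he
    have e1 : 12 * k + (M - 1) = 12 * k + M - 1 := by omega
    have e3 : 12 * k + (M - 3) = 12 * k + M - 3 := by omega
    interval_cases r
    -- r = 0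
    · have hA : Pat 11 (guessSeq {1,3} {2,3} (12*k) σ (12*k + (M-1))) :=
        getIH (M-1) (j-1) 11 (by omega) (by omega) (by omega)
      have hB : Pat 9 (guessSeq {1,3} {2,3} (12*k) σ (12*k + (M-3))) :=
        getIH (M-3) (j-1) 9 (by omega) (by omega) (by omega)
      rw [e1] at hA; rw [e3] at hB
      have ha : guessSeq {1,3} {2,3} (12*k) σ (12*k + M - 1) = 1 := hA
      have hb : guessSeq {1,3} {2,3} (12*k) σ (12*k + M - 3) ≠ 0 := hB
      have hg2 : grundy {1,3} {2,3} ((12*k+M)/2) ≠ 0 :=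
        grundy_even_ne (by omega) (by omega)
      have hg3 : grundy {1,3} {2,3} ((12*k+M)/3) ≠ 0 :=
        grundy_even_ne (by omega) (by omega)
      show mex _ = 0
      apply mex_eq_zero
      intro h
      simp only [Set.mem_union, Set.mem_insert_iff, Set.mem_singleton_iff,
        Set.mem_setOf_eq] at h
      rcases h with (h | h) | (⟨-, h⟩ | ⟨-, h⟩) <;> omega
    -- r = 1
    · have hA : Pat 0 (guessSeq {1,3} {2,3} (12*k) σ (12*k + (M-1))) :=
        getIH (M-1) j 0 (by omega) (by omega) (by omega)
      have hB : Pat 10 (guessSeq {1,3} {2,3} (12*k) σ (12*k + (M-3))) :=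
        getIH (M-3) (j-1) 10 (by omega) (by omega) (by omega)
      rw [e1] at hA; rw [e3] at hB
      have ha : guessSeq {1,3} {2,3} (12*k) σ (12*k + M - 1) = 0 := hA
      have hb : guessSeq {1,3} {2,3} (12*k) σ (12*k + M - 3) = 2 ∨
          guessSeq {1,3} {2,3} (12*k) σ (12*k + M - 3) = 3 := hB
      show mex _ = 1
      apply mex_eq_of
      · intro h
        simp only [Set.mem_union, Set.mem_insert_iff, Set.mem_singleton_iff,
          Set.mem_setOf_eq] at h
        rcases hb with hb | hb <;>
          (rcases h with (h | h) | (⟨hd, -⟩ | ⟨hd, -⟩) <;> omega)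
      · intro p hp
        have : p = 0 := by omega
        subst this
        simp only [Set.mem_union, Set.mem_insert_iff, Set.mem_singleton_iff,
          Set.mem_setOf_eq]
        exact Or.inl (Or.inl ha.symm)
    -- r = 2
    · have hA : Pat 1 (guessSeq {1,3} {2,3} (12*k) σ (12*k + (M-1))) :=
        getIH (M-1) j 1 (by omega) (by omega) (by omega)
      have hB : Pat 11 (guessSeq {1,3} {2,3} (12*k) σ (12*k + (M-3))) :=
        getIH (M-3) (j-1) 11 (by omega) (by omega) (by omega)
      rw [e1] at hA; rw [e3] at hB
      have ha : guessSeq {1,3} {2,3} (12*k) σ (12*k + M - 1) = 1 := hA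
      have hb : guessSeq {1,3} {2,3} (12*k) σ (12*k + M - 3) = 1 := hB
      have hg2 : grundy {1,3} {2,3} ((12*k+M)/2) = 0 :=
        grundy_coprime (by omega) (by omega) (by omega)
      have hd2 : (2:ℕ) ∣ (12*k+M) := by omega
      show mex _ = 2 ∨ mex _ = 3
      left
      apply mex_eq_of
      · intro h
        simp only [Set.mem_union, Set.mem_insert_iff, Set.mem_singleton_iff,
          Set.mem_setOf_eq] at h
        rcases h with (h | h) | (⟨-, h⟩ | ⟨hd, -⟩) <;> omega
      · intro p hp
        simp only [Set.mem_union, Set.mem_insert_iff, Set.mem_singleton_iff,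
          Set.mem_setOf_eq]
        interval_cases p
        · exact Or.inr (Or.inl ⟨hd2, hg2.symm⟩)
        · exact Or.inl (Or.inl ha.symm)
    -- r = 3
    · have hB : Pat 0 (guessSeq {1,3} {2,3} (12*k) σ (12*k + (M-3))) :=
        getIH (M-3) j 0 (by omega) (by omega) (by omega)
      rw [e3] at hB
      have hb : guessSeq {1,3} {2,3} (12*k) σ (12*k + M - 3) = 0 := hB
      show mex _ ≠ 0
      apply mex_ne_of_mem _ (step_set_finite _ _ _ _ _)
      simp only [Set.mem_union, Set.mem_insert_iff, Set.mem_singleton_iff,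
        Set.mem_setOf_eq]
      exact Or.inl (Or.inr hb.symm)
    -- r = 4
    · have hA : Pat 3 (guessSeq {1,3} {2,3} (12*k) σ (12*k + (M-1))) :=
        getIH (M-1) j 3 (by omega) (by omega) (by omega)
      have hB : Pat 1 (guessSeq {1,3} {2,3} (12*k) σ (12*k + (M-3))) :=
        getIH (M-3) j 1 (by omega) (by omega) (by omega)
      rw [e1] at hA; rw [e3] at hB
      have ha : guessSeq {1,3} {2,3} (12*k) σ (12*k + M - 1) ≠ 0 := hA
      have hb : guessSeq {1,3} {2,3} (12*k) σ (12*k + M - 3) = 1 := hB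
      have hg2 : grundy {1,3} {2,3} ((12*k+M)/2) ≠ 0 :=
        grundy_even_ne (by omega) (by omega)
      show mex _ = 0
      apply mex_eq_zero
      intro h
      simp only [Set.mem_union, Set.mem_insert_iff, Set.mem_singleton_iff,
        Set.mem_setOf_eq] at h
      rcases h with (h | h) | (⟨-, h⟩ | ⟨hd, -⟩) <;> omega
    -- r = 5
    · have hA : Pat 4 (guessSeq {1,3} {2,3} (12*k) σ (12*k + (M-1))) :=
        getIH (M-1) j 4 (by omega) (by omega) (by omega)
      have hB : Pat 2 (guessSeq {1,3} {2,3} (12*k) σ (12*k + (M-3))) :=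
        getIH (M-3) j 2 (by omega) (by omega) (by omega)
      rw [e1] at hA; rw [e3] at hB
      have ha : guessSeq {1,3} {2,3} (12*k) σ (12*k + M - 1) = 0 := hA
      have hb : guessSeq {1,3} {2,3} (12*k) σ (12*k + M - 3) = 2 ∨
          guessSeq {1,3} {2,3} (12*k) σ (12*k + M - 3) = 3 := hB
      show mex _ = 1
      apply mex_eq_of
      · intro h
        simp only [Set.mem_union, Set.mem_insert_iff, Set.mem_singleton_iff,
          Set.mem_setOf_eq] at h
        rcases hb with hb | hb <;>
          (rcases h with (h | h) | (⟨hd, -⟩ | ⟨hd, -⟩) <;> omega)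
      · intro p hp
        have : p = 0 := by omega
        subst this
        simp only [Set.mem_union, Set.mem_insert_iff, Set.mem_singleton_iff,
          Set.mem_setOf_eq]
        exact Or.inl (Or.inl ha.symm)
    -- r = 6
    · have hA : Pat 5 (guessSeq {1,3} {2,3} (12*k) σ (12*k + (M-1))) :=
        getIH (M-1) j 5 (by omega) (by omega) (by omega)
      rw [e1] at hA
      have ha : guessSeq {1,3} {2,3} (12*k) σ (12*k + M - 1) = 1 := hA
      show mex _ ≠ 1
      apply mex_ne_of_mem _ (step_set_finite _ _ _ _ _)
      simp only [Set.mem_union, Set.mem_insert_iff, Set.mem_singleton_iff,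
        Set.mem_setOf_eq]
      exact Or.inl (Or.inl ha.symm)
    -- r = 7
    · have hA : Pat 6 (guessSeq {1,3} {2,3} (12*k) σ (12*k + (M-1))) :=
        getIH (M-1) j 6 (by omega) (by omega) (by omega)
      have hB : Pat 4 (guessSeq {1,3} {2,3} (12*k) σ (12*k + (M-3))) :=
        getIH (M-3) j 4 (by omega) (by omega) (by omega)
      rw [e1] at hA; rw [e3] at hB
      have ha : guessSeq {1,3} {2,3} (12*k) σ (12*k + M - 1) ≠ 1 := hA
      have hb : guessSeq {1,3} {2,3} (12*k) σ (12*k + M - 3) = 0 := hB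
      show mex _ = 1
      apply mex_eq_of
      · intro h
        simp only [Set.mem_union, Set.mem_insert_iff, Set.mem_singleton_iff,
          Set.mem_setOf_eq] at h
        rcases h with (h | h) | (⟨hd, -⟩ | ⟨hd, -⟩) <;> omega
      · intro p hp
        have : p = 0 := by omega
        subst this
        simp only [Set.mem_union, Set.mem_insert_iff, Set.mem_singleton_iff,
          Set.mem_setOf_eq]
        exact Or.inl (Or.inr hb.symm)
    -- r = 8
    · have hA : Pat 7 (guessSeq {1,3} {2,3} (12*k) σ (12*k + (M-1))) :=
        getIH (M-1) j 7 (by omega) (by omega) (by omega)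
      have hB : Pat 5 (guessSeq {1,3} {2,3} (12*k) σ (12*k + (M-3))) :=
        getIH (M-3) j 5 (by omega) (by omega) (by omega)
      rw [e1] at hA; rw [e3] at hB
      have ha : guessSeq {1,3} {2,3} (12*k) σ (12*k + M - 1) = 1 := hA
      have hb : guessSeq {1,3} {2,3} (12*k) σ (12*k + M - 3) = 1 := hB
      have hg2 : grundy {1,3} {2,3} ((12*k+M)/2) ≠ 0 :=
        grundy_even_ne (by omega) (by omega)
      show mex _ = 0
      apply mex_eq_zero
      intro h
      simp only [Set.mem_union, Set.mem_insert_iff, Set.mem_singleton_iff,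
        Set.mem_setOf_eq] at h
      rcases h with (h | h) | (⟨-, h⟩ | ⟨hd, -⟩) <;> omega
    -- r = 9
    · have hA : Pat 8 (guessSeq {1,3} {2,3} (12*k) σ (12*k + (M-1))) :=
        getIH (M-1) j 8 (by omega) (by omega) (by omega)
      rw [e1] at hA
      have ha : guessSeq {1,3} {2,3} (12*k) σ (12*k + M - 1) = 0 := hA
      show mex _ ≠ 0
      apply mex_ne_of_mem _ (step_set_finite _ _ _ _ _)
      simp only [Set.mem_union, Set.mem_insert_iff, Set.mem_singleton_iff,
        Set.mem_setOf_eq]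
      exact Or.inl (Or.inl ha.symm)
    -- r = 10
    · have hA : Pat 9 (guessSeq {1,3} {2,3} (12*k) σ (12*k + (M-1))) :=
        getIH (M-1) j 9 (by omega) (by omega) (by omega)
      have hB : Pat 7 (guessSeq {1,3} {2,3} (12*k) σ (12*k + (M-3))) :=
        getIH (M-3) j 7 (by omega) (by omega) (by omega)
      rw [e1] at hA; rw [e3] at hB
      have ha : guessSeq {1,3} {2,3} (12*k) σ (12*k + M - 1) ≠ 0 := hA
      have hb : guessSeq {1,3} {2,3} (12*k) σ (12*k + M - 3) = 1 := hB
      have hg2 : grundy {1,3} {2,3} ((12*k+M)/2) = 0 :=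
        grundy_coprime (by omega) (by omega) (by omega)
      have hd2 : (2:ℕ) ∣ (12*k+M) := by omega
      show mex _ = 2 ∨ mex _ = 3
      by_cases ha2 : guessSeq {1,3} {2,3} (12*k) σ (12*k + M - 1) = 2
      · right
        apply mex_eq_of
        · intro h
          simp only [Set.mem_union, Set.mem_insert_iff, Set.mem_singleton_iff,
            Set.mem_setOf_eq] at h
          rcases h with (h | h) | (⟨-, h⟩ | ⟨hd, -⟩) <;> omega
        · intro p hp
          simp only [Set.mem_union, Set.mem_insert_iff, Set.mem_singleton_iff,
            Set.mem_setOf_eq]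
          interval_cases p
          · exact Or.inr (Or.inl ⟨hd2, hg2.symm⟩)
          · exact Or.inl (Or.inr hb.symm)
          · exact Or.inl (Or.inl ha2.symm)
      · left
        apply mex_eq_of
        · intro h
          simp only [Set.mem_union, Set.mem_insert_iff, Set.mem_singleton_iff,
            Set.mem_setOf_eq] at h
          rcases h with (h | h) | (⟨-, h⟩ | ⟨hd, -⟩) <;> omega
        · intro p hp
          simp only [Set.mem_union, Set.mem_insert_iff, Set.mem_singleton_iff,
            Set.mem_setOf_eq]
          interval_cases p
          · exact Or.inr (Or.inl ⟨hd2, hg2.symm⟩)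
          · exact Or.inl (Or.inr hb.symm)
    -- r = 11
    · have hA : Pat 10 (guessSeq {1,3} {2,3} (12*k) σ (12*k + (M-1))) :=
        getIH (M-1) j 10 (by omega) (by omega) (by omega)
      have hB : Pat 8 (guessSeq {1,3} {2,3} (12*k) σ (12*k + (M-3))) :=
        getIH (M-3) j 8 (by omega) (by omega) (by omega)
      rw [e1] at hA; rw [e3] at hB
      have ha : guessSeq {1,3} {2,3} (12*k) σ (12*k + M - 1) = 2 ∨
          guessSeq {1,3} {2,3} (12*k) σ (12*k + M - 1) = 3 := hA
      have hb : guessSeq {1,3} {2,3} (12*k) σ (12*k + M - 3) = 0 := hB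
      show mex _ = 1
      apply mex_eq_of
      · intro h
        simp only [Set.mem_union, Set.mem_insert_iff, Set.mem_singleton_iff,
          Set.mem_setOf_eq] at h
        rcases ha with ha | ha <;>
          (rcases h with (h | h) | (⟨hd, -⟩ | ⟨hd, -⟩) <;> omega)
      · intro p hp
        have : p = 0 := by omega
        subst this
        simp only [Set.mem_union, Set.mem_insert_iff, Set.mem_singleton_iff,
          Set.mem_setOf_eq]
        exact Or.inl (Or.inr hb.symm)
/-- In i-MARK({1,3},{2,3}) (so `s = max S = 3`), for every `k ≥ 1` and `T ∈ {2,3}`,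
the tuple `(0, 1, T)` is a valid guess seed for starting position `n = 12k`, and its guess
sequence has the 12-periodic pattern `(0, 1, T, N, 0, 1, L, 1, 0, N, T, 1)`, where `N` denotes
a nonzero value, `T` a value in `{2,3}`, and `L` a value different from 1. -/
theorem imark_13_23_guess_pattern (k T : ℕ) (hk : 1 ≤ k) (hT : T = 2 ∨ T = 3)
    (σ : ℕ → ℕ)
    (hσ : σ = fun i => if i = 12 * k then 0 else if i = 12 * k + 1 then 1
      else if i = 12 * k + 2 then T else 0) :
    IsGuessSeed {1, 3} {2, 3} (12 * k) σ ∧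
    ∀ j : ℕ,
      guessSeq {1, 3} {2, 3} (12 * k) σ (12 * k + 12 * j) = 0 ∧
      guessSeq {1, 3} {2, 3} (12 * k) σ (12 * k + 12 * j + 1) = 1 ∧
      (guessSeq {1, 3} {2, 3} (12 * k) σ (12 * k + 12 * j + 2) = 2 ∨
        guessSeq {1, 3} {2, 3} (12 * k) σ (12 * k + 12 * j + 2) = 3) ∧
      guessSeq {1, 3} {2, 3} (12 * k) σ (12 * k + 12 * j + 3) ≠ 0 ∧
      guessSeq {1, 3} {2, 3} (12 * k) σ (12 * k + 12 * j + 4) = 0 ∧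
      guessSeq {1, 3} {2, 3} (12 * k) σ (12 * k + 12 * j + 5) = 1 ∧
      guessSeq {1, 3} {2, 3} (12 * k) σ (12 * k + 12 * j + 6) ≠ 1 ∧
      guessSeq {1, 3} {2, 3} (12 * k) σ (12 * k + 12 * j + 7) = 1 ∧
      guessSeq {1, 3} {2, 3} (12 * k) σ (12 * k + 12 * j + 8) = 0 ∧
      guessSeq {1, 3} {2, 3} (12 * k) σ (12 * k + 12 * j + 9) ≠ 0 ∧
      (guessSeq {1, 3} {2, 3} (12 * k) σ (12 * k + 12 * j + 10) = 2 ∨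
        guessSeq {1, 3} {2, 3} (12 * k) σ (12 * k + 12 * j + 10) = 3) ∧
      guessSeq {1, 3} {2, 3} (12 * k) σ (12 * k + 12 * j + 11) = 1 := by
  
  have h0 : σ (12 * k) = 0 := by subst hσ; simp
  have h1 : σ (12 * k + 1) = 1 := by subst hσ; simp only; rw [if_neg (by omega)]; simp
  have h2 : σ (12 * k + 2) = T := by
    subst hσ; simp only; rw [if_neg (by omega), if_neg (by omega)]; simp
  constructor
  · intro i hi hi3
    rw [sup13] at hi3
    rw [numFollowers, if_neg (by omega)]
    have hS : (({1,3} : Finset ℕ).filter fun s => s ≤ i).card = 2 := by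
      rw [Finset.filter_true_of_mem (fun x hx => by
        simp only [Finset.mem_insert, Finset.mem_singleton] at hx; omega)]
      rfl
    rcases (show i = 12*k ∨ i = 12*k+1 ∨ i = 12*k+2 by omega) with rfl | rfl | rfl
    · rw [h0]; omega
    · rw [h1]; omega
    · rw [h2]
      have hD : 1 ≤ (({2,3} : Finset ℕ).filter fun d => d ∣ (12*k+2)).card := by
        have hsub : ({2} : Finset ℕ) ⊆ ({2,3} : Finset ℕ).filter fun d => d ∣ (12*k+2) := by
          intro x hx
          simp only [Finset.mem_singleton] at hx
          subst hx
          refine Finset.mem_filter.mpr ⟨by simp, by omega⟩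
        simpa using Finset.card_le_card hsub
      omega
  · intro j
    have key := main_key k T hk hT σ h0 h1 h2
    have P0 : Pat 0 (guessSeq {1,3} {2,3} (12*k) σ (12*k + (12*j+0))) :=
      key _ j 0 (by omega) rfl
    have P1 : Pat 1 (guessSeq {1,3} {2,3} (12*k) σ (12*k + (12*j+1))) :=
      key _ j 1 (by omega) rfl
    have P2 : Pat 2 (guessSeq {1,3} {2,3} (12*k) σ (12*k + (12*j+2))) :=
      key _ j 2 (by omega) rfl
    have P3 : Pat 3 (guessSeq {1,3} {2,3} (12*k) σ (12*k + (12*j+3))) :=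
      key _ j 3 (by omega) rfl
    have P4 : Pat 4 (guessSeq {1,3} {2,3} (12*k) σ (12*k + (12*j+4))) :=
      key _ j 4 (by omega) rfl
    have P5 : Pat 5 (guessSeq {1,3} {2,3} (12*k) σ (12*k + (12*j+5))) :=
      key _ j 5 (by omega) rfl
    have P6 : Pat 6 (guessSeq {1,3} {2,3} (12*k) σ (12*k + (12*j+6))) :=
      key _ j 6 (by omega) rfl
    have P7 : Pat 7 (guessSeq {1,3} {2,3} (12*k) σ (12*k + (12*j+7))) :=
      key _ j 7 (by omega) rfl
    have P8 : Pat 8 (guessSeq {1,3} {2,3} (12*k) σ (12*k + (12*j+8))) :=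
      key _ j 8 (by omega) rfl
    have P9 : Pat 9 (guessSeq {1,3} {2,3} (12*k) σ (12*k + (12*j+9))) :=
      key _ j 9 (by omega) rfl
    have P10 : Pat 10 (guessSeq {1,3} {2,3} (12*k) σ (12*k + (12*j+10))) :=
      key _ j 10 (by omega) rfl
    have P11 : Pat 11 (guessSeq {1,3} {2,3} (12*k) σ (12*k + (12*j+11))) :=
      key _ j 11 (by omega) rfl
    rw [show 12*k + (12*j+0) = 12*k + 12*j by ring] at P0
    rw [show 12*k + (12*j+1) = 12*k + 12*j + 1 by ring] at P1
    rw [show 12*k + (12*j+2) = 12*k + 12*j + 2 by ring] at P2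
    rw [show 12*k + (12*j+3) = 12*k + 12*j + 3 by ring] at P3
    rw [show 12*k + (12*j+4) = 12*k + 12*j + 4 by ring] at P4
    rw [show 12*k + (12*j+5) = 12*k + 12*j + 5 by ring] at P5
    rw [show 12*k + (12*j+6) = 12*k + 12*j + 6 by ring] at P6
    rw [show 12*k + (12*j+7) = 12*k + 12*j + 7 by ring] at P7
    rw [show 12*k + (12*j+8) = 12*k + 12*j + 8 by ring] at P8
    rw [show 12*k + (12*j+9) = 12*k + 12*j + 9 by ring] at P9
    rw [show 12*k + (12*j+10) = 12*k + 12*j + 10 by ring] at P10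
    rw [show 12*k + (12*j+11) = 12*k + 12*j + 11 by ring] at P11
    exact ⟨P0, P1, P2, P3, P4, P5, P6, P7, P8, P9, P10, P11⟩
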